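/- Let k ≥ 2, d ≤ m, and N_1,…,N_m > k+1. Let F ⊆ ∏_{i=1}^m {1,…,N_i} have k-Natarajan dimension at most d. Then |F| ≤ k^{m-d} · ∑_{i=0}^d ∑_{S ⊆ [m], |S|=i} ∏_{j∈S} C(N_j, k+1), where C(n,r) is the binomial coefficient. -/

import Mathlib

/-- `F ⊆ ∏ᵢ [Nᵢ]` `k`-Natarajan shatters the set `S` of coordinates. -/
def kNatShatters {m : ℕ} {N : Fin m → ℕ} (k : ℕ) (F : Finset (∀ i, Fin (N i)))
    (S : Finset (Fin m)) : Prop :=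
  ∃ y : ∀ i, Finset (Fin (N i)),
    (∀ i ∈ S, (y i).card = k + 1) ∧
    ∀ g : ∀ i, Fin (N i), (∀ i ∈ S, g i ∈ y i) → ∃ f ∈ F, ∀ i ∈ S, f i = g i

/-- generic version of the shattering predicate over an arbitrary index type -/
def gShat {ι : Type*} {N : ι → ℕ} (k : ℕ) (F : Finset (∀ i, Fin (N i)))
    (S : Finset ι) : Prop :=
  ∃ y : ∀ i, Finset (Fin (N i)),
    (∀ i ∈ S, (y i).card = k + 1) ∧
    ∀ g : ∀ i, Fin (N i), (∀ i ∈ S, g i ∈ y i) → ∃ f ∈ F, ∀ i ∈ S, f i = g i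

private lemma le_add_choose (k : ℕ) : ∀ t : ℕ, t ≤ k + t.choose (k + 1) := by
  intro t
  induction t with
  | zero => exact Nat.zero_le _
  | succ t ih =>
    rcases Nat.lt_or_ge t k with h | h
    · omega
    · have h1 : 0 < t.choose k := Nat.choose_pos h
      have h2 : (t + 1).choose (k + 1) = t.choose k + t.choose (k + 1) :=
        Nat.choose_succ_succ t k
      omega

private lemma self_le_choose {k n : ℕ} (h : k + 1 < n) : n ≤ n.choose (k + 1) := by
  have e : n - 1 + 1 = n := by omega
  have h1 := Nat.add_one_mul_choose_eq (n - 1) k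
  rw [e] at h1
  have h2 : k + 1 ≤ (n - 1).choose k := by
    calc k + 1 = (k + 1).choose k := (Nat.choose_succ_self_right k).symm
    _ ≤ (n - 1).choose k := Nat.choose_le_choose k (by omega)
  have h3 : n * (k + 1) ≤ n.choose (k + 1) * (k + 1) := by
    calc n * (k + 1) ≤ n * (n - 1).choose k := Nat.mul_le_mul_left n h2
    _ = n.choose (k + 1) * (k + 1) := h1
  exact Nat.le_of_mul_le_mul_right h3 (by omega)

/-- if all members of `H` take value `z` at coordinate `i₀`, a shattered set avoids `i₀`. -/
private lemma not_mem_of_shatters {ι : Type*} [DecidableEq ι] {N : ι → ℕ} {k : ℕ}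
    (hk : 1 ≤ k) (hN : ∀ i, 0 < N i) {H : Finset (∀ i, Fin (N i))} {i₀ : ι}
    {z : Fin (N i₀)} (hH : ∀ h ∈ H, h i₀ = z) {S : Finset ι}
    (hS : gShat k H S) : i₀ ∉ S := by
  intro hmem
  obtain ⟨y, hy, hsh⟩ := hS
  have hcard : 1 < (y i₀).card := by rw [hy i₀ hmem]; omega
  obtain ⟨a, ha, b, hb, hab⟩ := Finset.one_lt_card.mp hcard
  have hg : ∀ i : ι, ∃ v : Fin (N i), i ∈ S → v ∈ y i := by
    intro i
    by_cases hi : i ∈ S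
    · obtain ⟨v, hv⟩ := Finset.card_pos.mp (by rw [hy i hi]; omega)
      exact ⟨v, fun _ => hv⟩
    · exact ⟨⟨0, hN i⟩, fun h => absurd h hi⟩
  choose g hgm using hg
  have key : ∀ v : Fin (N i₀), v ∈ y i₀ → v = z := by
    intro v hv
    have hcons : ∀ i ∈ S, Function.update g i₀ v i ∈ y i := by
      intro i hi
      by_cases h : i = i₀
      · subst h; rwa [Function.update_self]
      · rw [Function.update_of_ne h]; exact hgm i hi
    obtain ⟨f, hf, hfe⟩ := hsh (Function.update g i₀ v) hcons
    have h5 := hfe i₀ hmem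
    rw [Function.update_self] at h5
    rw [← h5, hH f hf]
  exact hab ((key a ha).trans (key b hb).symm)

private lemma aux {ι : Type*} [Fintype ι] [DecidableEq ι] (k : ℕ) (hk : 1 ≤ k)
    (N : ι → ℕ) (hN : ∀ i, k + 1 < N i) :
    ∀ A : Finset ι, ∀ (d : ℕ) (F : Finset (∀ i, Fin (N i))),
      (∀ f ∈ F, ∀ f' ∈ F, ∀ i, i ∉ A → f i = f' i) →
      (∀ S : Finset ι, gShat k F S → S.card ≤ d) →
      F.card ≤ k ^ (A.card - d) *
        ∑ S ∈ A.powerset.filter (fun S => S.card ≤ d), ∏ j ∈ S, (N j).choose (k + 1) := by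
  intro A
  induction A using Finset.strongInduction with
  | _ A ih =>
  intro d F hagree hdim
  by_cases hdA : A.card ≤ d
  · -- crude bound: |F| ≤ ∏_{i ∈ A} N i ≤ ∑_{S ⊆ A} ∏ C
    have h1 : F.card ≤ ∏ i ∈ A, N i := by
      have hinj : Set.InjOn (fun (f : ∀ i, Fin (N i)) (i : {x // x ∈ A}) => f i.1) ↑F := by
        intro f hf f' hf' h
        funext i
        by_cases hi : i ∈ A
        · exact congrFun h ⟨i, hi⟩
        · exact hagree f hf f' hf' i hi
      calc F.card ≤ (Finset.univ : Finset (∀ i : {x // x ∈ A}, Fin (N i.1))).card :=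
            Finset.card_le_card_of_injOn _ (fun _ _ => Finset.mem_univ _) hinj
      _ = ∏ i : {x // x ∈ A}, Fintype.card (Fin (N i.1)) := by
            rw [Finset.card_univ, Fintype.card_pi]
      _ = ∏ i : {x // x ∈ A}, N i.1 := by simp
      _ = ∏ i ∈ A, N i := Finset.prod_coe_sort A N
    have h2 : ∏ i ∈ A, N i ≤ ∏ i ∈ A, ((N i).choose (k + 1) + 1) :=
      Finset.prod_le_prod' (fun i _ => le_trans (self_le_choose (hN i)) (Nat.le_succ _))
    have h3 : ∏ i ∈ A, ((N i).choose (k + 1) + 1)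
        = ∑ S ∈ A.powerset, ∏ j ∈ S, (N j).choose (k + 1) := by
      rw [Finset.prod_add (fun i => (N i).choose (k + 1)) (fun _ => 1) A]
      simp
    have h4 : A.powerset.filter (fun S => S.card ≤ d) = A.powerset :=
      Finset.filter_true_of_mem
        (fun S hS => le_trans (Finset.card_le_card (Finset.mem_powerset.mp hS)) hdA)
    have h5 : A.card - d = 0 := Nat.sub_eq_zero_of_le hdA
    rw [h4, h5, pow_zero, one_mul]
    omega
  · push_neg at hdA
    obtain ⟨i₀, hi₀⟩ : A.Nonempty := Finset.card_pos.mp (by omega)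
    set A' := A.erase i₀ with hA'
    have hi₀A' : i₀ ∉ A' := Finset.notMem_erase _ _
    have hApos : 0 < A.card := by omega
    have hcardA : A.card = A'.card + 1 := by
      rw [hA', Finset.card_erase_of_mem hi₀]; omega
    have hAins : A = insert i₀ A' := (Finset.insert_erase hi₀).symm
    have hsub : A' ⊂ A := Finset.erase_ssubset hi₀
    set z : Fin (N i₀) := ⟨0, by have := hN i₀; omega⟩ with hz
    set ρ : (∀ i, Fin (N i)) → (∀ i, Fin (N i)) := fun f => Function.update f i₀ z with hρ
    set G := F.image ρ with hG
    set Y : (∀ i, Fin (N i)) → Finset (Fin (N i₀)) :=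
      fun g => (F.filter (fun f => ρ f = g)).image (fun f => f i₀) with hY
    have hNpos : ∀ i, 0 < N i := fun i => by have := hN i; omega
    have hGz : ∀ g ∈ G, g i₀ = z := by
      intro g hg
      obtain ⟨f, _, rfl⟩ := Finset.mem_image.mp hg
      simp only [hρ]
      exact Function.update_self _ _ _
    -- |F| = ∑_{g ∈ G} |Y g|
    have hcount : F.card = ∑ g ∈ G, (Y g).card := by
      rw [hG, Finset.card_eq_sum_card_image ρ F]
      refine Finset.sum_congr rfl fun g hg => ?_
      refine (Finset.card_image_of_injOn ?_).symm
      intro f hf f' hf' he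
      simp only [Finset.mem_coe, Finset.mem_filter] at hf hf'
      funext i
      by_cases h : i = i₀
      · subst h; exact he
      · have h6 := congrFun (hf.2.trans hf'.2.symm) i
        simp only [hρ, Function.update_of_ne h] at h6
        exact h6
    -- dimension of G
    have hGdim : ∀ S : Finset ι, gShat k G S → S.card ≤ d := by
      intro S hS
      have hi₀S : i₀ ∉ S := not_mem_of_shatters hk hNpos hGz hS
      apply hdim
      obtain ⟨y, hy, hsh⟩ := hS
      refine ⟨y, hy, fun g hg => ?_⟩
      obtain ⟨h, hh, hhe⟩ := hsh g hg
      obtain ⟨f, hf, rfl⟩ := Finset.mem_image.mp hh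
      refine ⟨f, hf, fun i hi => ?_⟩
      have hne : i ≠ i₀ := fun e => hi₀S (e ▸ hi)
      have h7 := hhe i hi
      simp only [hρ, Function.update_of_ne hne] at h7
      exact h7
    -- dimension of the classes F_T
    have hFT : ∀ T : Finset (Fin (N i₀)), T.card = k + 1 →
        ∀ S : Finset ι, gShat k (G.filter (fun g => T ⊆ Y g)) S → S.card + 1 ≤ d := by
      intro T hT S hS
      have hsub' : ∀ h ∈ G.filter (fun g => T ⊆ Y g), h i₀ = z :=
        fun h hh => hGz h (Finset.mem_filter.mp hh).1
      have hi₀S : i₀ ∉ S := not_mem_of_shatters hk hNpos hsub' hS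
      have hins : (insert i₀ S).card ≤ d := by
        apply hdim
        obtain ⟨y, hy, hsh⟩ := hS
        refine ⟨Function.update y i₀ T, ?_, ?_⟩
        · intro i hi
          rcases Finset.mem_insert.mp hi with rfl | hi
          · rw [Function.update_self]; exact hT
          · have hne : i ≠ i₀ := fun e => hi₀S (e ▸ hi)
            rw [Function.update_of_ne hne]; exact hy i hi
        · intro g hg
          obtain ⟨h, hh, hhe⟩ := hsh g (fun i hi => by
            have hne : i ≠ i₀ := fun e => hi₀S (e ▸ hi)
            have h8 := hg i (Finset.mem_insert_of_mem hi)
            rwa [Function.update_of_ne hne] at h8)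
          obtain ⟨hhG, hhT⟩ := Finset.mem_filter.mp hh
          have hgi₀ : g i₀ ∈ Y h := hhT (by
            have h9 := hg i₀ (Finset.mem_insert_self _ _)
            rwa [Function.update_self] at h9)
          simp only [hY] at hgi₀
          obtain ⟨f, hfmem, hfi₀⟩ := Finset.mem_image.mp hgi₀
          obtain ⟨hfF, hfρ⟩ := Finset.mem_filter.mp hfmem
          refine ⟨f, hfF, fun i hi => ?_⟩
          rcases Finset.mem_insert.mp hi with rfl | hi
          · exact hfi₀
          · have hne : i ≠ i₀ := fun e => hi₀S (e ▸ hi)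
            have h10 : ρ f i = h i := congrFun hfρ i
            simp only [hρ, Function.update_of_ne hne] at h10
            rw [h10]
            exact hhe i hi
      rwa [Finset.card_insert_of_notMem hi₀S] at hins
    -- double counting
    have hswap : ∑ g ∈ G, ((Y g).card.choose (k + 1)) =
        ∑ T ∈ Finset.powersetCard (k + 1) (Finset.univ : Finset (Fin (N i₀))),
          (G.filter (fun g => T ⊆ Y g)).card := by
      have hptc : ∀ g : ∀ i, Fin (N i), (Y g).card.choose (k + 1) =
          ((Finset.powersetCard (k + 1) (Finset.univ : Finset (Fin (N i₀)))).filter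
            (fun T => T ⊆ Y g)).card := by
        intro g
        rw [← Finset.card_powersetCard (k + 1) (Y g)]
        congr 1
        ext T
        simp only [Finset.mem_powersetCard, Finset.mem_filter, Finset.subset_univ,
          true_and]
        tauto
      calc ∑ g ∈ G, (Y g).card.choose (k + 1)
          = ∑ g ∈ G, ∑ T ∈ Finset.powersetCard (k + 1)
              (Finset.univ : Finset (Fin (N i₀))), if T ⊆ Y g then 1 else 0 := by
            refine Finset.sum_congr rfl fun g _ => ?_
            rw [hptc g, Finset.card_filter]
      _ = ∑ T ∈ Finset.powersetCard (k + 1) (Finset.univ : Finset (Fin (N i₀))),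
            ∑ g ∈ G, if T ⊆ Y g then 1 else 0 := Finset.sum_comm
      _ = ∑ T ∈ Finset.powersetCard (k + 1) (Finset.univ : Finset (Fin (N i₀))),
            (G.filter (fun g => T ⊆ Y g)).card := by
            exact Finset.sum_congr rfl fun T _ => (Finset.card_filter _ _).symm
    -- the pointwise bound
    have hptw : F.card ≤ k * G.card +
        ∑ T ∈ Finset.powersetCard (k + 1) (Finset.univ : Finset (Fin (N i₀))),
          (G.filter (fun g => T ⊆ Y g)).card := by
      rw [hcount, ← hswap]
      calc ∑ g ∈ G, (Y g).card ≤ ∑ g ∈ G, (k + (Y g).card.choose (k + 1)) :=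
            Finset.sum_le_sum fun g _ => le_add_choose k _
      _ = k * G.card + ∑ g ∈ G, (Y g).card.choose (k + 1) := by
            rw [Finset.sum_add_distrib, Finset.sum_const, smul_eq_mul, mul_comm]
    -- agreement for G
    have hGagree : ∀ g ∈ G, ∀ g' ∈ G, ∀ i, i ∉ A' → g i = g' i := by
      intro g hg g' hg' i hi
      by_cases h : i = i₀
      · subst h; rw [hGz g hg, hGz g' hg']
      · have hiA : i ∉ A := fun hiA => hi (Finset.mem_erase.mpr ⟨h, hiA⟩)
        obtain ⟨f, hf, rfl⟩ := Finset.mem_image.mp hg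
        obtain ⟨f', hf', rfl⟩ := Finset.mem_image.mp hg'
        simp only [hρ, Function.update_of_ne h]
        exact hagree f hf f' hf' i hiA
    rcases d with _ | e
    · -- d = 0 : all F_T are empty
      have hTempty : ∀ T ∈ Finset.powersetCard (k + 1)
          (Finset.univ : Finset (Fin (N i₀))), (G.filter (fun g => T ⊆ Y g)) = ∅ := by
        intro T hT
        by_contra hne
        obtain ⟨g, hg⟩ := Finset.nonempty_iff_ne_empty.mpr hne
        have hsh0 : gShat k (G.filter (fun g => T ⊆ Y g)) ∅ :=
          ⟨fun _ => ∅, by simp, fun g' _ => ⟨g, hg, by simp⟩⟩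
        have := hFT T (Finset.mem_powersetCard.mp hT).2 ∅ hsh0
        simp at this
      have hzero : ∑ T ∈ Finset.powersetCard (k + 1)
          (Finset.univ : Finset (Fin (N i₀))), (G.filter (fun g => T ⊆ Y g)).card = 0 :=
        Finset.sum_eq_zero fun T hT => by rw [hTempty T hT, Finset.card_empty]
      have hone : ∀ B : Finset ι,
          ∑ S ∈ B.powerset.filter (fun S => S.card ≤ 0), ∏ j ∈ S, (N j).choose (k + 1)
            = 1 := by
        intro B
        have hB : B.powerset.filter (fun S => S.card ≤ 0) = {∅} := by
          ext S
          simp only [Finset.mem_filter, Finset.mem_powerset, Nat.le_zero,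
            Finset.card_eq_zero, Finset.mem_singleton]
          exact ⟨fun h => h.2, fun h => ⟨by simp [h], h⟩⟩
        rw [hB, Finset.sum_singleton, Finset.prod_empty]
      have hG0 := ih A' hsub 0 G hGagree hGdim
      rw [hone A', Nat.sub_zero, mul_one] at hG0
      rw [hone A, Nat.sub_zero, mul_one, hcardA, pow_succ]
      calc F.card ≤ k * G.card + 0 := by rw [← hzero]; exact hptw
      _ = k * G.card := by omega
      _ ≤ k * k ^ A'.card := Nat.mul_le_mul_left k hG0
      _ = k ^ A'.card * k := mul_comm _ _
    · -- d = e + 1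
      have hde : e + 1 ≤ A'.card := by omega
      have hGbound := ih A' hsub (e + 1) G hGagree hGdim
      have hTbound : ∀ T ∈ Finset.powersetCard (k + 1)
          (Finset.univ : Finset (Fin (N i₀))),
          (G.filter (fun g => T ⊆ Y g)).card ≤ k ^ (A'.card - e) *
            ∑ S ∈ A'.powerset.filter (fun S => S.card ≤ e),
              ∏ j ∈ S, (N j).choose (k + 1) := by
        intro T hT
        refine ih A' hsub e _ ?_ ?_
        · exact fun g hg g' hg' i hi =>
            hGagree g (Finset.filter_subset _ _ hg) g' (Finset.filter_subset _ _ hg') i hi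
        · intro S hS
          have := hFT T (Finset.mem_powersetCard.mp hT).2 S hS
          omega
      have hsum : ∑ T ∈ Finset.powersetCard (k + 1)
          (Finset.univ : Finset (Fin (N i₀))), (G.filter (fun g => T ⊆ Y g)).card ≤
          (N i₀).choose (k + 1) * (k ^ (A'.card - e) *
            ∑ S ∈ A'.powerset.filter (fun S => S.card ≤ e),
              ∏ j ∈ S, (N j).choose (k + 1)) := by
        have h1 := Finset.sum_le_sum hTbound
        rwa [Finset.sum_const, smul_eq_mul, Finset.card_powersetCard,
          Finset.card_univ, Fintype.card_fin] at h1
      have hsplit : ∑ S ∈ A.powerset.filter (fun S => S.card ≤ e + 1),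
            ∏ j ∈ S, (N j).choose (k + 1)
          = (∑ S ∈ A'.powerset.filter (fun S => S.card ≤ e + 1),
              ∏ j ∈ S, (N j).choose (k + 1))
            + (N i₀).choose (k + 1) *
              ∑ S ∈ A'.powerset.filter (fun S => S.card ≤ e),
                ∏ j ∈ S, (N j).choose (k + 1) := by
        rw [Finset.sum_filter, Finset.sum_filter, Finset.sum_filter]
        conv_lhs => rw [hAins]
        rw [Finset.sum_powerset_insert hi₀A']
        congr 1
        rw [Finset.mul_sum]
        refine Finset.sum_congr rfl fun S hS => ?_
        have hiS : i₀ ∉ S := fun h => hi₀A' (Finset.mem_powerset.mp hS h)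
        rw [Finset.card_insert_of_notMem hiS, Finset.prod_insert hiS]
        by_cases h : S.card ≤ e
        · rw [if_pos (by omega), if_pos h]
        · rw [if_neg (by omega), if_neg h, mul_zero]
      have hke : k * k ^ (A'.card - (e + 1)) = k ^ (A'.card - e) := by
        rw [← pow_succ']
        congr 1
        omega
      have hexp : A.card - (e + 1) = A'.card - e := by omega
      rw [hsplit, hexp]
      refine le_trans hptw ?_
      refine le_trans (add_le_add (Nat.mul_le_mul_left k hGbound) hsum) (le_of_eq ?_)
      rw [← mul_assoc, hke]
      ring

/-- Sauer's lemma for lists: if `k ≥ 2`, `d ≤ m`, each `Nᵢ > k+1` and the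
`k`-Natarajan dimension of `F ⊆ ∏ᵢ [Nᵢ]` is at most `d`, then
`|F| ≤ k^(m-d) ∑_{i=0}^d ∑_{|S|=i} ∏_{j∈S} C(Nⱼ, k+1)`. -/
theorem stmt1 {m d k : ℕ} (hk : 2 ≤ k) (hdm : d ≤ m) (N : Fin m → ℕ)
    (hN : ∀ i, k + 1 < N i) (F : Finset (∀ i, Fin (N i)))
    (hdim : ∀ S : Finset (Fin m), kNatShatters k F S → S.card ≤ d) :
    F.card ≤ k ^ (m - d) *
      ∑ i ∈ Finset.range (d + 1),
        ∑ S ∈ Finset.powersetCard i (Finset.univ : Finset (Fin m)),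
          ∏ j ∈ S, (N j).choose (k + 1) := by
  have hk1 : 1 ≤ k := by omega
  have h := aux k hk1 N hN Finset.univ d F
    (fun f _ f' _ i hi => absurd (Finset.mem_univ i) hi)
    (fun S hS => hdim S hS)
  rw [Finset.card_univ, Fintype.card_fin] at h
  refine h.trans (le_of_eq ?_)
  congr 1
  calc ∑ S ∈ (Finset.univ : Finset (Fin m)).powerset.filter (fun S => S.card ≤ d),
        ∏ j ∈ S, (N j).choose (k + 1)
      = ∑ S ∈ (Finset.univ : Finset (Fin m)).powerset,
          if S.card ≤ d then ∏ j ∈ S, (N j).choose (k + 1) else 0 :=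
        Finset.sum_filter _ _
  _ = ∑ S ∈ (Finset.univ : Finset (Fin m)).powerset,
        ∑ i ∈ Finset.range (d + 1),
          if S.card = i then ∏ j ∈ S, (N j).choose (k + 1) else 0 := by
        refine Finset.sum_congr rfl fun S _ => ?_
        simp only [Finset.sum_ite_eq, Finset.mem_range]
        by_cases h : S.card ≤ d
        · rw [if_pos h, if_pos (by omega)]
        · rw [if_neg h, if_neg (by omega)]
  _ = ∑ i ∈ Finset.range (d + 1),
        ∑ S ∈ (Finset.univ : Finset (Fin m)).powerset,
          if S.card = i then ∏ j ∈ S, (N j).choose (k + 1) else 0 := Finset.sum_comm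
  _ = ∑ i ∈ Finset.range (d + 1),
        ∑ S ∈ Finset.powersetCard i (Finset.univ : Finset (Fin m)),
          ∏ j ∈ S, (N j).choose (k + 1) := by
        refine Finset.sum_congr rfl fun i _ => ?_
        rw [Finset.powersetCard_eq_filter, Finset.sum_filter]
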